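/- arXiv:2303.10355 — 2 statements merged into one kernel-verified Lean document; each statement's English description precedes it below -/
import Mathlib

section
/- Let a, b ≥ 0 with a + b > 0, let 1 ≤ q < p, r < ∞, let û > 0 be the unique positive solution of −q + p·a·u^{p−q} + r·b·u^{r−q} = 0, and set α = q^{−1}·p·a·û^{p−q} (equivalently α = 1 − q^{−1}·r·b·û^{r−q}, and α ∈ [0,1]). Define F(u, v, α) = −((1−α)u + αv)^q + a·v^p + b·u^r for u, v ≥ 0. Then F(û, û, α) ≤ F(u, v, α) for all u, v ≥ 0; in particular, −û^q + a·û^p + b·û^r ≤ −u^q + a·u^p + b·u^r for all u ≥ 0. -/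
lemma aux_single (c s q u0 t : ℝ) (hc : 0 ≤ c) (hq : 1 ≤ q) (hs : q < s)
    (hu0 : 0 < u0) (ht : 0 ≤ t) :
    c * u0 ^ s - (q⁻¹ * s * c * u0 ^ (s - q)) * u0 ^ q ≤
      c * t ^ s - (q⁻¹ * s * c * u0 ^ (s - q)) * t ^ q := by
  have hq0 : 0 < q := lt_of_lt_of_le one_pos hq
  have hs0 : 0 < s := hq0.trans hs
  -- weighted AM-GM: (t^s)^(q/s) * (u0^s)^((s-q)/s) ≤ (q/s) t^s + ((s-q)/s) u0^s
  have hw1 : (0:ℝ) ≤ q / s := by positivity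
  have hw2 : (0:ℝ) ≤ (s - q) / s := by
    apply div_nonneg (by linarith) hs0.le
  have hz1 : (0:ℝ) ≤ t ^ s := Real.rpow_nonneg ht s
  have hz2 : (0:ℝ) ≤ u0 ^ s := Real.rpow_nonneg hu0.le s
  have hsum : q / s + (s - q) / s = 1 := by field_simp; ring
  have hkey := Real.geom_mean_le_arith_mean2_weighted hw1 hw2 hz1 hz2 hsum
  have e1 : (t ^ s) ^ (q / s) = t ^ q := by
    rw [← Real.rpow_mul ht]
    congr 1; field_simp
  have e2 : (u0 ^ s) ^ ((s - q) / s) = u0 ^ (s - q) := by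
    rw [← Real.rpow_mul hu0.le]
    congr 1; field_simp
  rw [e1, e2] at hkey
  -- also u0^(s-q) * u0^q = u0^s
  have e3 : u0 ^ (s - q) * u0 ^ q = u0 ^ s := by
    rw [← Real.rpow_add hu0]; ring_nf
  -- multiply hkey by (s/q) * c and rearrange
  have h4 : (s / q) * c * (t ^ q * u0 ^ (s - q)) ≤
      (s / q) * c * (q / s * t ^ s + (s - q) / s * u0 ^ s) :=
    mul_le_mul_of_nonneg_left hkey (by positivity)
  have hqne : q ≠ 0 := hq0.ne'
  have hsne : s ≠ 0 := hs0.ne'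
  have h5 : (s / q) * c * (q / s * t ^ s + (s - q) / s * u0 ^ s) =
      c * t ^ s + ((s - q) / q) * c * u0 ^ s := by field_simp
  rw [h5] at h4
  have hLHS : c * u0 ^ s - (q⁻¹ * s * c * u0 ^ (s - q)) * u0 ^ q =
      -(((s - q) / q) * c * u0 ^ s) := by
    have : (q⁻¹ * s * c * u0 ^ (s - q)) * u0 ^ q = (s / q) * c * u0 ^ s := by
      rw [mul_assoc, e3]; ring
    rw [this]; field_simp; ring
  have hRHS : (q⁻¹ * s * c * u0 ^ (s - q)) * t ^ q =
      (s / q) * c * (t ^ q * u0 ^ (s - q)) := by ring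
  rw [hLHS, hRHS]
  linarith

/-- **Lemma 3, minimization part.**
Let `a, b ≥ 0`, `a + b > 0`, `1 ≤ q < p, r < ∞`, let `u0 > 0` be the positive solution of
`-q + p·a·u^(p-q) + r·b·u^(r-q) = 0` and `α = q⁻¹·p·a·u0^(p-q)`.  With
`F (u, v, α) = -((1-α)u + αv)^q + a·v^p + b·u^r`, one has `F (u0, u0, α) ≤ F (u, v, α)`
for all `u, v ≥ 0`; in particular `-u0^q + a·u0^p + b·u0^r ≤ -u^q + a·u^p + b·u^r`
for all `u ≥ 0`. -/
theorem lemma_L3_min (a b p q r u0 α : ℝ)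
    (ha : 0 ≤ a) (hb : 0 ≤ b) (hab : 0 < a + b)
    (hq : 1 ≤ q) (hqp : q < p) (hqr : q < r)
    (hu0 : 0 < u0)
    (hroot : -q + p * a * u0 ^ (p - q) + r * b * u0 ^ (r - q) = 0)
    (hα : α = q⁻¹ * p * a * u0 ^ (p - q)) :
    (∀ u v : ℝ, 0 ≤ u → 0 ≤ v →
      -((1 - α) * u0 + α * u0) ^ q + a * u0 ^ p + b * u0 ^ r ≤
        -((1 - α) * u + α * v) ^ q + a * v ^ p + b * u ^ r) ∧
    (∀ u : ℝ, 0 ≤ u →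
      -u0 ^ q + a * u0 ^ p + b * u0 ^ r ≤ -u ^ q + a * u ^ p + b * u ^ r) := by
  have hq0 : 0 < q := lt_of_lt_of_le one_pos hq
  have hp0 : 0 < p := hq0.trans hqp
  have hr0 : 0 < r := hq0.trans hqr
  have hα0 : 0 ≤ α := by rw [hα]; positivity
  have h1α : 1 - α = q⁻¹ * r * b * u0 ^ (r - q) := by
    rw [hα]
    field_simp
    linarith
  have h1α0 : 0 ≤ 1 - α := by rw [h1α]; positivity
  have key : ∀ u v : ℝ, 0 ≤ u → 0 ≤ v →
      -u0 ^ q + a * u0 ^ p + b * u0 ^ r ≤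
        -((1 - α) * u + α * v) ^ q + a * v ^ p + b * u ^ r := by
    intro u v hu hv
    -- convexity of x ↦ x^q
    have hconv := (convexOn_rpow hq).2 (Set.mem_Ici.mpr hu) (Set.mem_Ici.mpr hv)
      h1α0 hα0 (by ring)
    simp only [smul_eq_mul] at hconv
    -- single-variable minimizations
    have hA := aux_single a p q u0 v ha hq hqp hu0 hv
    have hB := aux_single b r q u0 u hb hq hqr hu0 hu
    rw [show q⁻¹ * p * a * u0 ^ (p - q) = α from hα.symm] at hA
    rw [show q⁻¹ * r * b * u0 ^ (r - q) = 1 - α from h1α.symm] at hB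
    have hsum : -u0 ^ q + a * u0 ^ p + b * u0 ^ r ≤
        -((1 - α) * u ^ q + α * v ^ q) + a * v ^ p + b * u ^ r := by
      nlinarith [hA, hB]
    calc -u0 ^ q + a * u0 ^ p + b * u0 ^ r
        ≤ -((1 - α) * u ^ q + α * v ^ q) + a * v ^ p + b * u ^ r := hsum
      _ ≤ -((1 - α) * u + α * v) ^ q + a * v ^ p + b * u ^ r := by linarith [hconv]
  have hcollapse : (1 - α) * u0 + α * u0 = u0 := by ring
  constructor
  · intro u v hu hv
    rw [hcollapse]
    exact key u v hu hv
  · intro u hu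
    have := key u u hu hu
    have hId : (1 - α) * u + α * u = u := by ring
    rw [hId] at this
    exact this
end

section
/- Let ν ≥ 1, ν > η > 0, and 0 < θ ≤ 2ν, and define ψ_θ(ξ) = ( |ξ₁|^θ + … + |ξ_d|^θ )^{2/θ} on ℝ^d. Then for every measurable y ∈ L₂(ℝ^d) with ξ ↦ |ξ_j|^ν·y(ξ) in L₂(ℝ^d) for j = 1,…,d, the inequality ‖ψ_θ^{η/2}·y‖_{L₂(ℝ^d)} ≤ d^{η/θ}·‖y‖_{L₂(ℝ^d)}^{1−η/ν}·( max_{1≤j≤d} ‖ |ξ_j|^ν·y ‖_{L₂(ℝ^d)} )^{η/ν} holds, and the constant d^{η/θ} is sharp (no smaller constant works). -/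
open MeasureTheory ENNReal

private lemma cont_abs_rpow {p : ℝ} (hp : 0 ≤ p) : Continuous fun t : ℝ => |t| ^ p := by
  rw [continuous_iff_continuousAt]
  exact fun t => (Real.continuousAt_rpow_const _ _ (Or.inr hp)).comp continuous_abs.continuousAt

private lemma meas_coord {d : ℕ} (j : Fin d) :
    Measurable fun ξ : EuclideanSpace ℝ (Fin d) => ξ j :=
  (measurable_pi_apply j).comp (MeasurableEquiv.toLp 2 (Fin d → ℝ)).symm.measurable

private lemma part1 {d : ℕ} (hd : 1 ≤ d) (ν η θ : ℝ) (hν1 : 1 ≤ ν) (hνη : η < ν)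
    (hη : 0 < η) (hθ : 0 < θ) (hθν : θ ≤ 2 * ν) (y : EuclideanSpace ℝ (Fin d) → ℝ)
    (hy : MemLp y 2 volume) :
    eLpNorm (fun ξ => ((∑ i, |ξ i| ^ θ) ^ (2 / θ)) ^ (η / 2) * y ξ) 2 volume ≤
      ENNReal.ofReal ((d : ℝ) ^ (η / θ)) * eLpNorm y 2 volume ^ (1 - η / ν) *
        (⨆ j : Fin d, eLpNorm (fun ξ => |ξ j| ^ ν * y ξ) 2 volume) ^ (η / ν) := by
  have hν0 : (0:ℝ) < ν := lt_of_lt_of_le one_pos hν1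
  set μ : Measure (EuclideanSpace ℝ (Fin d)) := volume with hμ
  set α : ℝ := η / ν with hα
  have hα0 : 0 < α := div_pos hη hν0
  have hα1 : α < 1 := (div_lt_one hν0).2 hνη
  have hd0 : (0:ℝ) < d := by exact_mod_cast hd
  set r : ℝ := 2 * ν / θ with hr
  have hr1 : 1 ≤ r := (le_div_iff₀ hθ).2 (by linarith)
  have h2ν : (0:ℝ) ≤ 2 * ν := by linarith
  -- basic objects
  set u : EuclideanSpace ℝ (Fin d) → ℝ≥0∞ := fun ξ => (‖y ξ‖₊ : ℝ≥0∞) ^ (2:ℝ) with hu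
  have humeas : AEMeasurable u μ :=
    ENNReal.continuous_rpow_const.measurable.comp_aemeasurable
      hy.aestronglyMeasurable.aemeasurable.enorm
  set P : EuclideanSpace ℝ (Fin d) → ℝ := fun ξ => ∑ i, |ξ i| ^ θ with hP
  set S : EuclideanSpace ℝ (Fin d) → ℝ := fun ξ => ∑ j, |ξ j| ^ (2 * ν) with hS
  have hP0 : ∀ ξ, 0 ≤ P ξ := fun ξ => Finset.sum_nonneg fun i _ => by positivity
  have hS0 : ∀ ξ, 0 ≤ S ξ := fun ξ => Finset.sum_nonneg fun i _ => by positivity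
  have hSmeas : Measurable fun ξ => ENNReal.ofReal (S ξ) :=
    (Finset.measurable_sum _ fun j _ =>
      ((cont_abs_rpow h2ν).measurable).comp (meas_coord j)).ennreal_ofReal
  have hwj : ∀ j : Fin d, Measurable fun ξ : EuclideanSpace ℝ (Fin d) =>
      ENNReal.ofReal (|ξ j| ^ (2*ν)) :=
    fun j => (((cont_abs_rpow h2ν).measurable).comp (meas_coord j)).ennreal_ofReal
  set q : ℝ := r * α with hq
  have h2 : (2:ℝ≥0∞).toReal = 2 := by norm_num
  -- pointwise identity for the LHS integrand
  have hpt : ∀ ξ, (‖((P ξ) ^ (2/θ)) ^ (η/2) * y ξ‖₊ : ℝ≥0∞) ^ (2:ℝ)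
      = ENNReal.ofReal (P ξ ^ q) * u ξ := by
    intro ξ
    have h1 : (0:ℝ) ≤ ((P ξ) ^ (2/θ)) ^ (η/2) := by positivity
    rw [nnnorm_mul, ENNReal.coe_mul, ENNReal.mul_rpow_of_nonneg _ _ (by norm_num : (0:ℝ) ≤ 2),
      ← enorm_eq_nnnorm, Real.enorm_eq_ofReal h1, ENNReal.ofReal_rpow_of_nonneg h1 (by norm_num)]
    congr 2
    rw [← Real.rpow_mul (hP0 ξ), ← Real.rpow_mul (hP0 ξ)]
    congr 1
    rw [hq, hr, hα]
    field_simp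
  -- pointwise power mean inequality
  have hpm : ∀ ξ, P ξ ^ q ≤ (d:ℝ) ^ ((r - 1) * α) * S ξ ^ α := by
    intro ξ
    have key : P ξ ^ r ≤ (d:ℝ) ^ (r - 1) * S ξ := by
      have hmean := Real.rpow_arith_mean_le_arith_mean_rpow Finset.univ
        (fun _ : Fin d => 1 / (d:ℝ)) (fun i => |ξ i| ^ θ)
        (fun i _ => by positivity)
        (by rw [Finset.sum_const, Finset.card_univ, Fintype.card_fin, nsmul_eq_mul]
            field_simp)
        (fun i _ => by positivity) hr1
      have hz : ∀ i : Fin d, (|ξ i| ^ θ) ^ r = |ξ i| ^ (2*ν) := by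
        intro i
        rw [← Real.rpow_mul (abs_nonneg _)]
        congr 1
        rw [hr]
        field_simp
      rw [← Finset.mul_sum, ← Finset.mul_sum] at hmean
      have hmean2 : ((1/(d:ℝ)) * P ξ) ^ r ≤ (1/(d:ℝ)) * S ξ := by
        calc ((1/(d:ℝ)) * P ξ) ^ r ≤ (1/(d:ℝ)) * ∑ i, (|ξ i| ^ θ) ^ r := hmean
        _ = (1/(d:ℝ)) * S ξ := by
            rw [hS]; congr 1; exact Finset.sum_congr rfl fun i _ => hz i
      have hexp : P ξ ^ r = (d:ℝ) ^ r * ((1/(d:ℝ)) * P ξ) ^ r := by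
        rw [Real.mul_rpow (by positivity) (hP0 ξ), ← mul_assoc,
          ← Real.mul_rpow hd0.le (by positivity), mul_one_div_cancel (ne_of_gt hd0),
          Real.one_rpow, one_mul]
      rw [hexp]
      calc (d:ℝ) ^ r * ((1/(d:ℝ)) * P ξ) ^ r ≤ (d:ℝ) ^ r * ((1/(d:ℝ)) * S ξ) :=
            mul_le_mul_of_nonneg_left hmean2 (by positivity)
        _ = (d:ℝ) ^ (r - 1) * S ξ := by
            rw [Real.rpow_sub hd0, Real.rpow_one]
            field_simp
    calc P ξ ^ q = (P ξ ^ r) ^ α := by rw [← Real.rpow_mul (hP0 ξ)]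
      _ ≤ ((d:ℝ) ^ (r - 1) * S ξ) ^ α := Real.rpow_le_rpow (by positivity) key hα0.le
      _ = (d:ℝ) ^ ((r - 1) * α) * S ξ ^ α := by
          rw [Real.mul_rpow (by positivity) (hS0 ξ), ← Real.rpow_mul hd0.le]
  -- squared L² norms
  set A : ℝ≥0∞ := ∫⁻ ξ, u ξ ∂μ with hA
  set Nj : Fin d → ℝ≥0∞ := fun j => eLpNorm (fun ξ : EuclideanSpace ℝ (Fin d) =>
    |ξ j| ^ ν * y ξ) 2 μ with hNj
  have hhalf : ((2:ℝ)⁻¹ * 2 : ℝ) = 1 := by norm_num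
  have hNj_sq : ∀ j, (∫⁻ ξ, ENNReal.ofReal (|ξ j| ^ (2*ν)) * u ξ ∂μ) = Nj j ^ (2:ℝ) := by
    intro j
    have hptj : ∀ ξ, (‖|ξ j| ^ ν * y ξ‖₊ : ℝ≥0∞) ^ (2:ℝ)
        = ENNReal.ofReal (|ξ j| ^ (2*ν)) * u ξ := by
      intro ξ
      rw [nnnorm_mul, ENNReal.coe_mul, ENNReal.mul_rpow_of_nonneg _ _ (by norm_num : (0:ℝ) ≤ 2),
        ← enorm_eq_nnnorm, Real.enorm_eq_ofReal (by positivity),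
        ENNReal.ofReal_rpow_of_nonneg (by positivity) (by norm_num)]
      congr 2
      rw [← Real.rpow_mul (abs_nonneg _)]
      ring_nf
    simp only [hNj]
    rw [eLpNorm_eq_lintegral_rpow_enorm_toReal two_ne_zero ENNReal.ofNat_ne_top, h2, one_div,
      ← ENNReal.rpow_mul, hhalf, ENNReal.rpow_one]
    exact (lintegral_congr fun ξ => hptj ξ).symm
  -- max index
  haveI : Nonempty (Fin d) := ⟨⟨0, hd⟩⟩
  obtain ⟨j₀, hj₀⟩ := Finite.exists_max Nj
  have hsup : (⨆ j, Nj j) = Nj j₀ := le_antisymm (iSup_le hj₀) (le_iSup _ j₀)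
  -- main integral estimate
  set L : ℝ≥0∞ := ∫⁻ ξ, ENNReal.ofReal (P ξ ^ q) * u ξ ∂μ with hL
  have main : L ≤ ENNReal.ofReal ((d:ℝ) ^ ((r-1)*α)) * A ^ (1 - α) *
      ((d:ℝ≥0∞) * Nj j₀ ^ (2:ℝ)) ^ α := by
    have step1 : L ≤ ENNReal.ofReal ((d:ℝ) ^ ((r-1)*α)) *
        ∫⁻ ξ, (ENNReal.ofReal (S ξ)) ^ α * u ξ ∂μ := by
      rw [← lintegral_const_mul' _ _ ENNReal.ofReal_ne_top]
      apply lintegral_mono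
      intro ξ
      show ENNReal.ofReal (P ξ ^ q) * u ξ ≤
        ENNReal.ofReal ((d:ℝ) ^ ((r-1)*α)) * ((ENNReal.ofReal (S ξ)) ^ α * u ξ)
      rw [← mul_assoc]
      refine mul_le_mul_left ?_ (u ξ)
      calc ENNReal.ofReal (P ξ ^ q) ≤ ENNReal.ofReal ((d:ℝ) ^ ((r-1)*α) * S ξ ^ α) :=
            ENNReal.ofReal_le_ofReal (hpm ξ)
        _ = ENNReal.ofReal ((d:ℝ) ^ ((r-1)*α)) * (ENNReal.ofReal (S ξ)) ^ α := by
            rw [ENNReal.ofReal_mul (by positivity), ENNReal.ofReal_rpow_of_nonneg (hS0 ξ) hα0.le]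
    have step2 : (∫⁻ ξ, (ENNReal.ofReal (S ξ)) ^ α * u ξ ∂μ) ≤
        A ^ (1 - α) * (∫⁻ ξ, ENNReal.ofReal (S ξ) * u ξ ∂μ) ^ α := by
      have hconj : Real.HolderConjugate (1/(1-α)) (1/α) := by
        constructor
        · rw [one_div, one_div, inv_inv, inv_inv, inv_one]; ring
        · exact div_pos one_pos (by linarith)
        · exact div_pos one_pos hα0
      have hh := ENNReal.lintegral_mul_le_Lp_mul_Lq μ hconj
        (f := fun ξ => u ξ ^ (1 - α)) (g := fun ξ => (ENNReal.ofReal (S ξ) * u ξ) ^ α)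
        (ENNReal.continuous_rpow_const.measurable.comp_aemeasurable humeas)
        (ENNReal.continuous_rpow_const.measurable.comp_aemeasurable
          ((hSmeas.aemeasurable).mul humeas))
      have heq1 : ∀ ξ, u ξ ^ (1 - α) * (ENNReal.ofReal (S ξ) * u ξ) ^ α
          = (ENNReal.ofReal (S ξ)) ^ α * u ξ := by
        intro ξ
        rw [ENNReal.mul_rpow_of_nonneg _ _ hα0.le]
        calc u ξ ^ (1-α) * (ENNReal.ofReal (S ξ) ^ α * u ξ ^ α)
            = ENNReal.ofReal (S ξ) ^ α * (u ξ ^ (1-α) * u ξ ^ α) := by ring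
          _ = ENNReal.ofReal (S ξ) ^ α * u ξ := by
              rw [← ENNReal.rpow_add_of_nonneg _ _ (by linarith) hα0.le]
              norm_num
      have i0 : (∫⁻ a, ((fun ξ => u ξ ^ (1 - α)) * fun ξ => (ENNReal.ofReal (S ξ) * u ξ) ^ α) a ∂μ)
          = ∫⁻ ξ, (ENNReal.ofReal (S ξ)) ^ α * u ξ ∂μ :=
        lintegral_congr fun ξ => by simpa only [Pi.mul_apply] using heq1 ξ
      have i1 : (∫⁻ a, ((fun ξ => u ξ ^ (1 - α)) a) ^ (1/(1-α)) ∂μ) = A := by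
        refine lintegral_congr fun ξ => ?_
        show (u ξ ^ (1 - α)) ^ (1/(1-α)) = u ξ
        rw [← ENNReal.rpow_mul, mul_one_div, div_self (by linarith : (1:ℝ)-α ≠ 0),
          ENNReal.rpow_one]
      have i2 : (∫⁻ a, ((fun ξ => (ENNReal.ofReal (S ξ) * u ξ) ^ α) a) ^ (1/α) ∂μ)
          = ∫⁻ ξ, ENNReal.ofReal (S ξ) * u ξ ∂μ := by
        refine lintegral_congr fun ξ => ?_
        show ((ENNReal.ofReal (S ξ) * u ξ) ^ α) ^ (1/α) = ENNReal.ofReal (S ξ) * u ξ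
        rw [← ENNReal.rpow_mul, mul_one_div, div_self (ne_of_gt hα0), ENNReal.rpow_one]
      rw [i0, i1, i2, one_div_one_div, one_div_one_div] at hh
      exact hh
    have step3 : (∫⁻ ξ, ENNReal.ofReal (S ξ) * u ξ ∂μ) ≤ (d:ℝ≥0∞) * Nj j₀ ^ (2:ℝ) := by
      have hsum : (∫⁻ ξ, ENNReal.ofReal (S ξ) * u ξ ∂μ)
          = ∑ j : Fin d, ∫⁻ ξ, ENNReal.ofReal (|ξ j| ^ (2*ν)) * u ξ ∂μ := by
        rw [← lintegral_finset_sum' (f := fun j ξ => ENNReal.ofReal (|ξ j| ^ (2*ν)) * u ξ) _ fun j _ => ((hwj j).aemeasurable.mul humeas)]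
        refine lintegral_congr fun ξ => ?_
        rw [hS]
        show ENNReal.ofReal (∑ i, |ξ i| ^ (2*ν)) * u ξ = _
        rw [ENNReal.ofReal_sum_of_nonneg (fun i _ => by positivity), Finset.sum_mul]
      rw [hsum]
      calc (∑ j : Fin d, ∫⁻ ξ, ENNReal.ofReal (|ξ j| ^ (2*ν)) * u ξ ∂μ)
          = ∑ j : Fin d, Nj j ^ (2:ℝ) := Finset.sum_congr rfl fun j _ => hNj_sq j
        _ ≤ Finset.univ.card • (Nj j₀ ^ (2:ℝ)) := Finset.sum_le_card_nsmul _ _ _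
            (fun j _ => ENNReal.rpow_le_rpow (hj₀ j) (by norm_num))
        _ = (d:ℝ≥0∞) * Nj j₀ ^ (2:ℝ) := by
            rw [Finset.card_univ, Fintype.card_fin, nsmul_eq_mul]
    calc L ≤ ENNReal.ofReal ((d:ℝ) ^ ((r-1)*α)) *
        ∫⁻ ξ, (ENNReal.ofReal (S ξ)) ^ α * u ξ ∂μ := step1
      _ ≤ ENNReal.ofReal ((d:ℝ) ^ ((r-1)*α)) *
          (A ^ (1 - α) * (∫⁻ ξ, ENNReal.ofReal (S ξ) * u ξ ∂μ) ^ α) :=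
            mul_le_mul_right step2 _
      _ ≤ ENNReal.ofReal ((d:ℝ) ^ ((r-1)*α)) *
          (A ^ (1 - α) * ((d:ℝ≥0∞) * Nj j₀ ^ (2:ℝ)) ^ α) :=
            mul_le_mul_right (mul_le_mul_right (ENNReal.rpow_le_rpow step3 hα0.le) _) _
      _ = ENNReal.ofReal ((d:ℝ) ^ ((r-1)*α)) * A ^ (1 - α) *
          ((d:ℝ≥0∞) * Nj j₀ ^ (2:ℝ)) ^ α := by rw [mul_assoc]
  -- convert eLpNorms
  have hLHS : eLpNorm (fun ξ : EuclideanSpace ℝ (Fin d) =>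
      ((∑ i, |ξ i| ^ θ) ^ (2 / θ)) ^ (η / 2) * y ξ) 2 μ = L ^ ((2:ℝ)⁻¹) := by
    rw [eLpNorm_eq_lintegral_rpow_enorm_toReal two_ne_zero ENNReal.ofNat_ne_top, h2, one_div]
    congr 1
    exact lintegral_congr fun ξ => hpt ξ
  have hy2 : eLpNorm y 2 μ = A ^ ((2:ℝ)⁻¹) := by
    rw [eLpNorm_eq_lintegral_rpow_enorm_toReal two_ne_zero ENNReal.ofNat_ne_top, h2, one_div]
    rfl
  rw [hLHS, hy2, hsup]
  -- final algebra
  calc L ^ ((2:ℝ)⁻¹) ≤ (ENNReal.ofReal ((d:ℝ) ^ ((r-1)*α)) * A ^ (1 - α) *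
        ((d:ℝ≥0∞) * Nj j₀ ^ (2:ℝ)) ^ α) ^ ((2:ℝ)⁻¹) :=
      ENNReal.rpow_le_rpow main (by norm_num)
    _ = ENNReal.ofReal ((d:ℝ) ^ (η/θ)) * (A ^ ((2:ℝ)⁻¹)) ^ (1 - α) * Nj j₀ ^ α := by
      rw [ENNReal.mul_rpow_of_nonneg _ _ (by norm_num : (0:ℝ) ≤ (2:ℝ)⁻¹),
          ENNReal.mul_rpow_of_nonneg _ _ (by norm_num : (0:ℝ) ≤ (2:ℝ)⁻¹),
          ENNReal.mul_rpow_of_nonneg _ _ hα0.le,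
          ENNReal.mul_rpow_of_nonneg _ _ (by norm_num : (0:ℝ) ≤ (2:ℝ)⁻¹),
          ← ENNReal.rpow_mul A, ← ENNReal.rpow_mul ((d:ℝ≥0∞)),
          ← ENNReal.rpow_mul (Nj j₀), ← ENNReal.rpow_mul (Nj j₀)]
      have e1 : ENNReal.ofReal ((d:ℝ) ^ ((r-1)*α)) ^ ((2:ℝ)⁻¹) * (d:ℝ≥0∞) ^ (α * (2:ℝ)⁻¹)
          = ENNReal.ofReal ((d:ℝ) ^ (η/θ)) := by
        rw [ENNReal.ofReal_rpow_of_nonneg (by positivity) (by norm_num),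
            ← ENNReal.ofReal_natCast d,
            ENNReal.ofReal_rpow_of_nonneg hd0.le (by positivity),
            ← Real.rpow_mul hd0.le,
            ← ENNReal.ofReal_mul (by positivity),
            ← Real.rpow_add hd0]
        congr 1
        congr 1
        rw [hr, hα]
        field_simp
        ring
      have e2 : ((1 - α) * (2:ℝ)⁻¹ : ℝ) = (2:ℝ)⁻¹ * (1 - α) := by ring
      have e3 : ((2:ℝ) * α * (2:ℝ)⁻¹ : ℝ) = α := by ring
      calc ENNReal.ofReal ((d:ℝ) ^ ((r-1)*α)) ^ ((2:ℝ)⁻¹) * A ^ ((1-α) * (2:ℝ)⁻¹) *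
            ((d:ℝ≥0∞) ^ (α * (2:ℝ)⁻¹) * Nj j₀ ^ ((2:ℝ) * α * (2:ℝ)⁻¹))
          = (ENNReal.ofReal ((d:ℝ) ^ ((r-1)*α)) ^ ((2:ℝ)⁻¹) * (d:ℝ≥0∞) ^ (α * (2:ℝ)⁻¹)) *
            A ^ ((1-α) * (2:ℝ)⁻¹) * Nj j₀ ^ ((2:ℝ) * α * (2:ℝ)⁻¹) := by ring
        _ = ENNReal.ofReal ((d:ℝ) ^ (η/θ)) * (A ^ ((2:ℝ)⁻¹)) ^ (1 - α) * Nj j₀ ^ α := by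
            rw [e1, e2, e3, ENNReal.rpow_mul]

private lemma part2 {d : ℕ} (hd : 1 ≤ d) (ν η θ : ℝ) (hν1 : 1 ≤ ν) (hνη : η < ν)
    (hη : 0 < η) (hθ : 0 < θ) (hθν : θ ≤ 2 * ν) (C' : ℝ) (hC' : C' < (d : ℝ) ^ (η / θ)) :
    ∃ y : EuclideanSpace ℝ (Fin d) → ℝ,
      MemLp y 2 volume ∧
      (∀ j : Fin d, MemLp (fun ξ => |ξ j| ^ ν * y ξ) 2 volume) ∧
      ¬ eLpNorm (fun ξ => ((∑ i, |ξ i| ^ θ) ^ (2 / θ)) ^ (η / 2) * y ξ) 2 volume ≤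
        ENNReal.ofReal C' * eLpNorm y 2 volume ^ (1 - η / ν) *
          (⨆ j : Fin d, eLpNorm (fun ξ => |ξ j| ^ ν * y ξ) 2 volume) ^ (η / ν) := by
  have hν0 : (0:ℝ) < ν := lt_of_lt_of_le one_pos hν1
  have hd0 : (0:ℝ) < d := by exact_mod_cast hd
  set α : ℝ := η / ν with hα
  have hα0 : 0 < α := div_pos hη hν0
  have hα1 : α < 1 := (div_lt_one hν0).2 hνη
  set D : ℝ := (d:ℝ) ^ (η / θ) with hD
  have hD0 : 0 < D := by positivity
  -- choose ε
  obtain ⟨ε, hε0, hε1, key⟩ :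
      ∃ ε : ℝ, 0 < ε ∧ ε < 1 ∧ C' * (1+ε)^η < D * (1-ε)^η := by
    rcases le_or_gt C' 0 with hC0 | hC0
    · refine ⟨1/2, by norm_num, by norm_num, ?_⟩
      have h1 : C' * (1+1/2:ℝ)^η ≤ 0 :=
        mul_nonpos_iff.2 (Or.inr ⟨hC0, by positivity⟩)
      have h2 : (0:ℝ) < D * (1-1/2:ℝ)^η := by
        apply mul_pos hD0
        norm_num
        positivity
      linarith
    · set rr := (C'/D) ^ η⁻¹ with hrr
      have hq0 : 0 < C'/D := div_pos hC0 hD0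
      have hr0 : 0 < rr := Real.rpow_pos_of_pos hq0 _
      have hr1 : rr < 1 := Real.rpow_lt_one hq0.le ((div_lt_one hD0).2 hC') (by positivity)
      set ε := (1 - rr)/(2*(1+rr)) with hε
      have hε0 : 0 < ε := div_pos (by linarith) (by linarith)
      have hε1 : ε < 1 := by
        rw [div_lt_one (by linarith)]; nlinarith
      refine ⟨ε, hε0, hε1, ?_⟩
      have hC'eq : C' = D * rr ^ η := by
        rw [hrr, Real.rpow_inv_rpow hq0.le (ne_of_gt hη)]
        field_simp
      have hee : ε * (1 + rr) = (1-rr)/2 := by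
        rw [hε]; field_simp
      have hlin : rr * (1+ε) < 1 - ε := by nlinarith
      calc C' * (1+ε)^η = D * (rr * (1+ε))^η := by
            rw [hC'eq, Real.mul_rpow hr0.le (by linarith), mul_assoc]
        _ < D * (1-ε)^η :=
            mul_lt_mul_of_pos_left (Real.rpow_lt_rpow (by positivity) hlin hη) hD0
  set a : ℝ := 1 - ε with ha'
  set b : ℝ := 1 + ε with hb'
  have ha : 0 < a := by rw [ha']; linarith
  have hb : 0 < b := by rw [hb']; linarith
  -- the cube
  set s : Set (EuclideanSpace ℝ (Fin d)) := {ξ | ∀ i, ξ i ∈ Set.Icc a b} with hsdef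
  have hseq : s = ⇑(MeasurableEquiv.toLp 2 (Fin d → ℝ)).symm ⁻¹'
      (Set.univ.pi fun _ : Fin d => Set.Icc a b) := by
    ext ξ
    simp only [hsdef, Set.mem_setOf_eq, Set.mem_preimage, Set.mem_pi, Set.mem_univ,
      true_implies]
    rfl
  have hs : MeasurableSet s := by
    rw [hseq]
    exact (MeasurableEquiv.toLp 2 (Fin d → ℝ)).symm.measurable
      (MeasurableSet.univ_pi fun _ => measurableSet_Icc)
  have hμs : volume s = ENNReal.ofReal (b - a) ^ d := by
    rw [hseq, (EuclideanSpace.volume_preserving_symm_measurableEquiv_toLp (Fin d)).measure_preimage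
      ((MeasurableSet.univ_pi fun _ : Fin d => measurableSet_Icc).nullMeasurableSet),
      volume_pi_pi]
    simp [Real.volume_Icc]
  have hba : 0 < b - a := by rw [ha', hb']; linarith
  have hμs0 : volume s ≠ 0 := by
    rw [hμs]
    exact pow_ne_zero _ (ne_of_gt (ENNReal.ofReal_pos.2 hba))
  have hμstop : volume s ≠ ⊤ := by
    rw [hμs]
    exact ENNReal.pow_ne_top ENNReal.ofReal_ne_top
  -- the function
  set y : EuclideanSpace ℝ (Fin d) → ℝ := s.indicator (fun _ => (1:ℝ)) with hydef
  have hy : MemLp y 2 volume := memLp_indicator_const 2 hs 1 (Or.inr hμstop)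
  have hymeas : Measurable y := measurable_const.indicator hs
  set N : ℝ≥0∞ := eLpNorm y 2 volume with hN
  have h2 : (2:ℝ≥0∞).toReal = 2 := by norm_num
  have hNval : N = volume s ^ ((2:ℝ)⁻¹) := by
    rw [hN, hydef, eLpNorm_indicator_const hs two_ne_zero ENNReal.ofNat_ne_top, h2, one_div]
    simp
  have hN0 : N ≠ 0 := by
    rw [hNval]
    exact ne_of_gt (ENNReal.rpow_pos (pos_iff_ne_zero.2 hμs0) hμstop)
  have hNtop : N ≠ ⊤ := by
    rw [hNval]
    exact ENNReal.rpow_ne_top_of_nonneg (by norm_num) hμstop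
  -- pointwise bounds
  have hub : ∀ (j : Fin d) ξ, ‖|ξ j| ^ ν * y ξ‖ ≤ ‖b ^ ν * y ξ‖ := by
    intro j ξ
    by_cases hξ : ξ ∈ s
    · have h1 := hξ j
      rw [hydef, Set.indicator_of_mem hξ]
      simp only [mul_one, Real.norm_eq_abs]
      rw [abs_of_nonneg (by positivity : (0:ℝ) ≤ |ξ j| ^ ν),
        abs_of_nonneg (by positivity : (0:ℝ) ≤ b ^ ν)]
      refine Real.rpow_le_rpow (abs_nonneg _) ?_ hν0.le
      rw [abs_le]
      exact ⟨by linarith [h1.1], h1.2⟩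
    · rw [hydef, Set.indicator_of_notMem hξ]
      simp
  have hlb : ∀ ξ, ‖(D * a ^ η) * y ξ‖ ≤
      ‖((∑ i, |ξ i| ^ θ) ^ (2/θ)) ^ (η/2) * y ξ‖ := by
    intro ξ
    by_cases hξ : ξ ∈ s
    · rw [hydef, Set.indicator_of_mem hξ]
      simp only [mul_one, Real.norm_eq_abs]
      rw [abs_of_nonneg (by positivity : (0:ℝ) ≤ D * a ^ η),
        abs_of_nonneg (by positivity : (0:ℝ) ≤ ((∑ i, |ξ i| ^ θ) ^ (2/θ)) ^ (η/2))]
      have hsum : (d:ℝ) * a ^ θ ≤ ∑ i, |ξ i| ^ θ := by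
        have : ∀ i : Fin d, a ^ θ ≤ |ξ i| ^ θ := fun i =>
          Real.rpow_le_rpow ha.le (le_trans (hξ i).1 (le_abs_self _)) hθ.le
        calc (d:ℝ) * a ^ θ = ∑ _i : Fin d, a ^ θ := by
              rw [Finset.sum_const, Finset.card_univ, Fintype.card_fin, nsmul_eq_mul]
          _ ≤ ∑ i, |ξ i| ^ θ := Finset.sum_le_sum fun i _ => this i
      have heq : (((d:ℝ) * a ^ θ) ^ (2/θ)) ^ (η/2) = D * a ^ η := by
        rw [← Real.rpow_mul (by positivity), Real.mul_rpow hd0.le (by positivity),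
          ← Real.rpow_mul ha.le]
        congr 1
        · rw [hD]; congr 1; field_simp
        · congr 1; field_simp
      rw [← heq]
      have h1 : ((d:ℝ) * a ^ θ) ^ (2/θ) ≤ (∑ i, |ξ i| ^ θ) ^ (2/θ) :=
        Real.rpow_le_rpow (by positivity) hsum (by positivity)
      exact Real.rpow_le_rpow (by positivity) h1 (by positivity)
    · rw [hydef, Set.indicator_of_notMem hξ]
      simp
  -- eLpNorm bounds
  have hconst : ∀ c : ℝ, 0 ≤ c →
      eLpNorm (fun ξ => c * y ξ) 2 volume = ENNReal.ofReal c * N := by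
    intro c hc
    have : (fun ξ => c * y ξ) = c • y := rfl
    rw [this, eLpNorm_const_smul, hN]
    congr 1
    rw [← Real.enorm_eq_ofReal hc]
  have hLB : ENNReal.ofReal (D * a ^ η) * N ≤
      eLpNorm (fun ξ => ((∑ i, |ξ i| ^ θ) ^ (2/θ)) ^ (η/2) * y ξ) 2 volume := by
    rw [← hconst _ (by positivity)]
    exact eLpNorm_mono hlb
  have hUBj : ∀ j : Fin d,
      eLpNorm (fun ξ => |ξ j| ^ ν * y ξ) 2 volume ≤ ENNReal.ofReal (b ^ ν) * N := by
    intro j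
    rw [← hconst _ (by positivity)]
    exact eLpNorm_mono (hub j)
  have hmemj : ∀ j : Fin d, MemLp (fun ξ => |ξ j| ^ ν * y ξ) 2 volume := by
    intro j
    refine MemLp.of_le (hy.const_mul (b ^ ν)) ?_ (Filter.Eventually.of_forall (hub j))
    exact ((((cont_abs_rpow hν0.le).measurable).comp (meas_coord j)).mul
      hymeas).aestronglyMeasurable
  refine ⟨y, hy, hmemj, fun h => ?_⟩
  -- derive contradiction
  have hNN : N ^ (1-α) * N ^ α = N := by
    rw [← ENNReal.rpow_add_of_nonneg _ _ (by linarith) hα0.le]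
    norm_num
  have hRHS : ENNReal.ofReal C' * N ^ (1-α) *
      (⨆ j : Fin d, eLpNorm (fun ξ => |ξ j| ^ ν * y ξ) 2 volume) ^ α ≤
      ENNReal.ofReal ((b ^ ν) ^ α * C') * N := by
    calc ENNReal.ofReal C' * N ^ (1-α) *
        (⨆ j : Fin d, eLpNorm (fun ξ => |ξ j| ^ ν * y ξ) 2 volume) ^ α
        ≤ ENNReal.ofReal C' * N ^ (1-α) * (ENNReal.ofReal (b ^ ν) * N) ^ α :=
          mul_le_mul_right (ENNReal.rpow_le_rpow (iSup_le hUBj) hα0.le) _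
      _ = ENNReal.ofReal C' * N ^ (1-α) *
          (ENNReal.ofReal ((b ^ ν) ^ α) * N ^ α) := by
          rw [ENNReal.mul_rpow_of_nonneg _ _ hα0.le,
            ENNReal.ofReal_rpow_of_nonneg (by positivity) hα0.le]
      _ = ENNReal.ofReal ((b ^ ν) ^ α) * ENNReal.ofReal C' * (N ^ (1-α) * N ^ α) := by
          ring
      _ = ENNReal.ofReal ((b ^ ν) ^ α * C') * N := by
          rw [hNN, ← ENNReal.ofReal_mul (by positivity)]
  have hstrict : ENNReal.ofReal ((b ^ ν) ^ α * C') * N < ENNReal.ofReal (D * a ^ η) * N := by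
    rw [ENNReal.mul_lt_mul_iff_left hN0 hNtop]
    rw [ENNReal.ofReal_lt_ofReal_iff (by positivity)]
    have hbη : (b ^ ν) ^ α = b ^ η := by
      rw [← Real.rpow_mul hb.le]
      congr 1
      rw [hα]
      field_simp
    rw [hbη, hb', ha']
    calc (1+ε) ^ η * C' = C' * (1+ε) ^ η := by ring
      _ < D * (1-ε) ^ η := key
  exact lt_irrefl _ (lt_of_le_of_lt (hLB.trans (h.trans hRHS)) hstrict)


/-- **Sharp inequality for powers of the generalized Laplacian (Fourier side).**
For `ν ≥ 1`, `ν > η > 0`, `0 < θ ≤ 2ν` and `ψ_θ(ξ) = (∑ |ξᵢ|^θ)^{2/θ}`, the sharp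
inequality `‖ψ_θ^{η/2}·y‖₂ ≤ d^{η/θ} ‖y‖₂^{1-η/ν} (maxⱼ ‖|ξⱼ|^ν·y‖₂)^{η/ν}` holds,
and `d^{η/θ}` cannot be replaced by a smaller constant. -/
theorem sharp_generalized_laplacian {d : ℕ} (hd : 1 ≤ d)
    (ν η θ : ℝ) (hν1 : 1 ≤ ν) (hνη : η < ν) (hη : 0 < η) (hθ : 0 < θ) (hθν : θ ≤ 2 * ν) :
    (∀ y : EuclideanSpace ℝ (Fin d) → ℝ,
      MemLp y 2 volume →
      (∀ j : Fin d, MemLp (fun ξ => |ξ j| ^ ν * y ξ) 2 volume) →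
      eLpNorm (fun ξ => ((∑ i, |ξ i| ^ θ) ^ (2 / θ)) ^ (η / 2) * y ξ) 2 volume ≤
        ENNReal.ofReal ((d : ℝ) ^ (η / θ)) *
          eLpNorm y 2 volume ^ (1 - η / ν) *
          (⨆ j : Fin d, eLpNorm (fun ξ => |ξ j| ^ ν * y ξ) 2 volume) ^ (η / ν)) ∧
    (∀ C' : ℝ, C' < (d : ℝ) ^ (η / θ) →
      ∃ y : EuclideanSpace ℝ (Fin d) → ℝ,
        MemLp y 2 volume ∧
        (∀ j : Fin d, MemLp (fun ξ => |ξ j| ^ ν * y ξ) 2 volume) ∧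
        ¬ eLpNorm (fun ξ => ((∑ i, |ξ i| ^ θ) ^ (2 / θ)) ^ (η / 2) * y ξ) 2 volume ≤
          ENNReal.ofReal C' *
            eLpNorm y 2 volume ^ (1 - η / ν) *
            (⨆ j : Fin d, eLpNorm (fun ξ => |ξ j| ^ ν * y ξ) 2 volume) ^ (η / ν)) := by
  constructor
  · exact fun y hy _ => part1 hd ν η θ hν1 hνη hη hθ hθν y hy
  · exact fun C' hC' => part2 hd ν η θ hν1 hνη hη hθ hθν C' hC'
end
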